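/- Every nontrivial commutative ring R which is finitely generated as a ℤ-algebra has a maximal ideal 𝔪 such that the residue field R/𝔪 is finite. -/

import Mathlib

theorem int_isJacobsonRing : IsJacobsonRing ℤ := by
  rw [isJacobsonRing_iff_prime_eq]
  intro P hP
  rcases eq_or_ne P ⊥ with rfl | hP0
  · refine eq_bot_iff.mpr fun x hx => ?_
    have := Ideal.mem_jacobson_bot.mp hx x
    rcases Int.isUnit_iff.mp this with h | h <;>
      simp only [Ideal.mem_bot] <;> nlinarith
  · haveI := @IsPrime.to_maximal_ideal ℤ _ _ _ P hP hP0
    exact Ideal.jacobson_eq_self_of_isMaximal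

theorem stmt9 (R : Type) [CommRing R] [Nontrivial R] [Algebra.FiniteType ℤ R] :
    ∃ m : Ideal R, m.IsMaximal ∧ Finite (R ⧸ m) := by
  obtain ⟨m, hm⟩ := Ideal.exists_maximal R
  refine ⟨m, hm, ?_⟩
  haveI := hm
  haveI : IsJacobsonRing ℤ := int_isJacobsonRing
  letI : Field (R ⧸ m) := Ideal.Quotient.field m
  haveI : Algebra.FiniteType ℤ (R ⧸ m) :=
    Algebra.FiniteType.of_surjective
      (Ideal.Quotient.mkₐ ℤ m) (Ideal.Quotient.mk_surjective)
  haveI : Module.Finite ℤ (R ⧸ m) := finite_of_finite_type_of_isJacobsonRing ℤ (R ⧸ m)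
  obtain ⟨p, hp⟩ := CharP.exists (R ⧸ m)
  rcases eq_or_ne p 0 with rfl | hp0
  · exfalso
    haveI : CharZero (R ⧸ m) := CharP.charP_to_charZero _
    have hinj : Function.Injective (algebraMap ℤ (R ⧸ m)) := fun a b h => by
      simpa using h
    haveI : Algebra.IsIntegral ℤ (R ⧸ m) := Algebra.IsIntegral.of_finite ℤ _
    have : IsField ℤ :=
      (Algebra.IsIntegral.isField_iff_isField (R := ℤ) (S := R ⧸ m) hinj).mpr
        (Field.toIsField _)
    exact Int.not_isField this
  · haveI := hp
    haveI : NeZero p := ⟨hp0⟩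
    haveI : Fact p.Prime := ⟨CharP.char_is_prime_of_pos (R ⧸ m) p |>.out⟩
    letI : Algebra (ZMod p) (R ⧸ m) := ZMod.algebra _ p
    haveI : Module.Finite (ZMod p) (R ⧸ m) := by
      obtain ⟨s, hs⟩ := Module.Finite.fg_top (R := ℤ) (M := R ⧸ m)
      refine ⟨⟨s, ?_⟩⟩
      rw [eq_top_iff]
      intro x _
      have hx : x ∈ Submodule.span ℤ (s : Set (R ⧸ m)) := hs ▸ Submodule.mem_top
      refine Submodule.span_induction (fun y hy => Submodule.subset_span hy)
        (Submodule.zero_mem _) (fun a b _ _ ha hb => Submodule.add_mem _ ha hb)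
        (fun n a _ ha => ?_) hx
      have h2 : ((n : ZMod p) : ZMod p) • a = n • a := by
        rw [Algebra.smul_def, map_intCast, ← zsmul_eq_mul]
      rw [← h2]
      exact Submodule.smul_mem _ _ ha
    exact Module.finite_of_finite (ZMod p)
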